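/- Suppose a_Q ∈ Q is such that for every face F of Q there exists a_F ∈ F with a_F + Q^F ⊆ Q and τ_i(a_F) ≤ τ_i(a_Q) for all i = 1, …, r. If a ∈ Q and β ∈ ℤ^d satisfy τ(a_Q + β)⁺ = τ(a + a_Q + β)⁺, then (β + Q) ∩ Q = (a + β + Q) ∩ Q. -/
import Mathlib

/-- The shift `α + S = {α + s : s ∈ S}` of a set `S ⊆ ℤ^d` by `α ∈ ℤ^d`. -/
def shiftSet {d : ℕ} (α : Fin d → ℤ) (S : Set (Fin d → ℤ)) : Set (Fin d → ℤ) :=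
  (α + ·) '' S

/-- The vector `ζ⁺ ∈ ℕ^r` obtained from `ζ ∈ ℤ^r` by replacing every negative
entry with `0`. -/
def plusPart {r : ℕ} (ζ : Fin r → ℤ) : Fin r → ℕ := fun i => (ζ i).toNat

/-- A face of `Q`: a submonoid `F ⊆ Q` such that `a + b ∈ F` with `a, b ∈ Q` forces
`a ∈ F` and `b ∈ F`. -/
def IsFaceOfMonoid {d : ℕ} (Q F : AddSubmonoid (Fin d → ℤ)) : Prop :=
  (F : Set (Fin d → ℤ)) ⊆ (Q : Set (Fin d → ℤ)) ∧
    ∀ a ∈ Q, ∀ b ∈ Q, a + b ∈ F → a ∈ F ∧ b ∈ F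

/-- The saturation `Q^sat = {x ∈ ℤ^d : n • x ∈ Q for some integer n ≥ 1}`. -/
def saturationOf {d : ℕ} (Q : AddSubmonoid (Fin d → ℤ)) : Set (Fin d → ℤ) :=
  {x | ∃ n : ℕ, 1 ≤ n ∧ n • x ∈ Q}

/-- The partial saturation `Q^F = (Q + F^gp) ∩ Q^sat` of `Q` at a face `F`. -/
def partialSat {d : ℕ} (Q F : AddSubmonoid (Fin d → ℤ)) : Set (Fin d → ℤ) :=
  {x | ∃ q ∈ Q, ∃ g ∈ AddSubgroup.closure (F : Set (Fin d → ℤ)), x = q + g} ∩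
    saturationOf Q

/-- Suppose `a_Q ∈ Q` is such that for every face `F` of `Q` there is `a_F ∈ F` with
`a_F + Q^F ⊆ Q` and `τ_i(a_F) ≤ τ_i(a_Q)` for all `i`.  If `a ∈ Q` and `β ∈ ℤ^d`
satisfy `τ(a_Q + β)⁺ = τ(a + a_Q + β)⁺`, then `(β + Q) ∩ Q = (a + β + Q) ∩ Q`. -/
theorem stmt12 {d r : ℕ} (Q : AddSubmonoid (Fin d → ℤ)) (hFG : Q.FG)
    (hgp : AddSubgroup.closure (Q : Set (Fin d → ℤ)) = ⊤)
    (τ : Fin r → ((Fin d → ℤ) →+ ℤ))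
    (hτQ : ∀ i, ∀ x ∈ Q, 0 ≤ τ i x)
    (hsat : saturationOf Q = {x : Fin d → ℤ | ∀ i, 0 ≤ τ i x})
    (aQ : Fin d → ℤ) (haQ : aQ ∈ Q)
    (haQF : ∀ F : AddSubmonoid (Fin d → ℤ), IsFaceOfMonoid Q F →
      ∃ aF ∈ F, (∀ x ∈ partialSat Q F, aF + x ∈ Q) ∧ ∀ i, τ i aF ≤ τ i aQ)
    (a : Fin d → ℤ) (ha : a ∈ Q) (β : Fin d → ℤ)
    (hplus : plusPart (fun i => τ i (aQ + β)) = plusPart (fun i => τ i (a + aQ + β))) :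
    shiftSet β (Q : Set (Fin d → ℤ)) ∩ (Q : Set (Fin d → ℤ)) =
      shiftSet (a + β) (Q : Set (Fin d → ℤ)) ∩ (Q : Set (Fin d → ℤ)) := by
  -- key consequence of `hplus`: if `τ i a > 0` then `τ i (a + aQ + β) ≤ 0`
  have hkey : ∀ i, 0 < τ i a → τ i (a + aQ + β) ≤ 0 := by
    intro i hi
    have h1 := congrFun hplus i
    simp only [plusPart] at h1
    have h2 : τ i (a + aQ + β) = τ i a + τ i (aQ + β) := by
      rw [add_assoc, map_add]
    omega
  -- the face `F = {x ∈ Q : τ i a = 0 → τ i x = 0}`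
  set F : AddSubmonoid (Fin d → ℤ) :=
    { carrier := {x | x ∈ Q ∧ ∀ i, τ i a = 0 → τ i x = 0}
      zero_mem' := ⟨Q.zero_mem, fun i _ => map_zero (τ i)⟩
      add_mem' := by
        rintro u v ⟨hu, hu'⟩ ⟨hv, hv'⟩
        exact ⟨Q.add_mem hu hv, fun i hi => by rw [map_add, hu' i hi, hv' i hi, add_zero]⟩ }
    with hF
  have hFface : IsFaceOfMonoid Q F := by
    constructor
    · rintro x ⟨hx, -⟩; exact hx
    · rintro u hu v hv ⟨-, huv⟩
      refine ⟨⟨hu, fun i hi => ?_⟩, ⟨hv, fun i hi => ?_⟩⟩ <;>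
      · have h0 := huv i hi
        rw [map_add] at h0
        have := hτQ i u hu
        have := hτQ i v hv
        omega
  obtain ⟨aF, haF, haFQ, haFτ⟩ := haQF F hFface
  have haFQ' : aF ∈ Q := haF.1
  have haFmem : a + aF ∈ F := F.add_mem ⟨ha, fun i hi => hi⟩ haF
  ext x
  constructor
  · rintro ⟨⟨q, hq, rfl⟩, hx⟩
    -- `hx : β + q ∈ Q`; want `β + q ∈ (a+β) + Q`, i.e. `q - a ∈ Q`.
    have hy : q - a - aF ∈ partialSat Q F := by
      constructor
      · refine ⟨q, hq, -(a + aF), ?_, by abel⟩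
        exact AddSubgroup.neg_mem _ (AddSubgroup.subset_closure haFmem)
      · rw [hsat]
        intro i
        have hq0 : 0 ≤ τ i q := hτQ i q hq
        have hx0 : 0 ≤ τ i (β + q) := hτQ i _ hx
        have ha0 : 0 ≤ τ i a := hτQ i a ha
        have hy0 : τ i (q - a - aF) = τ i q - τ i a - τ i aF := by
          simp [map_sub]
        by_cases hia : τ i a = 0
        · have hiaF : τ i aF = 0 := haF.2 i hia
          omega
        · have hia' : 0 < τ i a := lt_of_le_of_ne ha0 (Ne.symm hia)
          have hk := hkey i hia'
          have hk2 : τ i (a + aQ + β) = τ i a + τ i aQ + τ i β := by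
            simp [map_add]
          have hx1 : τ i (β + q) = τ i β + τ i q := by simp [map_add]
          have := haFτ i
          omega
    have hqa : q - a ∈ Q := by
      have := haFQ _ hy
      have heq : aF + (q - a - aF) = q - a := by abel
      rwa [heq] at this
    exact ⟨⟨q - a, hqa, by abel⟩, hx⟩
  · rintro ⟨⟨q, hq, rfl⟩, hx⟩
    exact ⟨⟨a + q, Q.add_mem ha hq, by abel⟩, hx⟩
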